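/- (Quantum Miura transformation for the finite W algebra W₃⁽²⁾.) Let A be an associative ℂ-algebra (with unit) containing elements e, f, h, s such that [h,e] = e, [h,f] = −f, [e,f] = 2h (where [a,b] = ab − ba), and s commutes with e, f and h. Define C = −(4/3)(h² + ½ef + ½fe) − (4/9)s² + (4/3)s − 1, H = 2h − (2/3)s + 1, E = −2(s − h − 1)e, F = (2/3)f. Then [H,E] = 2E, [H,F] = −2F, [E,F] = H² + C, and C commutes with each of H, E, F. -/
import Mathlib

/-- Quantum Miura transformation for the finite W algebra `W₃⁽²⁾`: in any associative
`ℂ`-algebra containing `e, f, h, s` with `[h,e] = e`, `[h,f] = -f`, `[e,f] = 2h` and `s`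
central, the Miura transforms `C, H, E, F` satisfy the `W₃⁽²⁾` relations
`[H,E] = 2E`, `[H,F] = -2F`, `[E,F] = H² + C`, with `C` central. -/
theorem quantum_miura_W3_2
    (A : Type*) [Ring A] [Algebra ℂ A]
    (e f h s : A)
    (hhe : h * e - e * h = e)
    (hhf : h * f - f * h = -f)
    (hef : e * f - f * e = 2 * h)
    (hse : s * e = e * s) (hsf : s * f = f * s) (hsh : s * h = h * s)
    (C H E F : A)
    (hC : C = -((4/3 : ℂ) • (h ^ 2 + (1/2 : ℂ) • (e * f) + (1/2 : ℂ) • (f * e)))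
        - (4/9 : ℂ) • s ^ 2 + (4/3 : ℂ) • s - 1)
    (hH : H = 2 * h - (2/3 : ℂ) • s + 1)
    (hE : E = -(2 * ((s - h - 1) * e)))
    (hF : F = (2/3 : ℂ) • f) :
    H * E - E * H = 2 * E ∧
    H * F - F * H = -(2 * F) ∧
    E * F - F * E = H ^ 2 + C ∧
    C * H = H * C ∧ C * E = E * C ∧ C * F = F * C := by
  have he0 : h * e = e * h + e := by
    rw [sub_eq_iff_eq_add.mp hhe]; abel
  have he : ∀ x : A, h * (e * x) = e * (h * x) + e * x := by
    intro x; rw [← mul_assoc, he0, add_mul, mul_assoc]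
  have fe0 : f * e = e * f - 2 * h := by
    have h1 : f * e - e * f = -(2*h) := by rw [← hef]; abel
    rw [sub_eq_iff_eq_add.mp h1]; abel
  have fe : ∀ x : A, f * (e * x) = e * (f * x) - 2 * (h * x) := by
    intro x; rw [← mul_assoc, fe0, sub_mul, mul_assoc, mul_assoc]
  have fh0 : f * h = h * f + f := by
    have h1 : f * h - h * f = f := by rw [← neg_sub, hhf, neg_neg]
    rw [sub_eq_iff_eq_add.mp h1]; abel
  have fh : ∀ x : A, f * (h * x) = h * (f * x) + f * x := by
    intro x; rw [← mul_assoc, fh0, add_mul, mul_assoc]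
  have se : ∀ x : A, s * (e * x) = e * (s * x) := by
    intro x; rw [← mul_assoc, hse, mul_assoc]
  have sf : ∀ x : A, s * (f * x) = f * (s * x) := by
    intro x; rw [← mul_assoc, hsf, mul_assoc]
  have sh : ∀ x : A, s * (h * x) = h * (s * x) := by
    intro x; rw [← mul_assoc, hsh, mul_assoc]
  have two' : ∀ x : A, 2 * x = (2:ℂ) • x := by
    intro x; rw [two_mul, two_smul]
  subst hC hH hE hF
  refine ⟨?_, ?_, ?_, ?_, ?_, ?_⟩ <;>
  · simp only [pow_two, mul_add, add_mul, mul_sub, sub_mul, mul_neg, neg_mul,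
      smul_mul_assoc, mul_smul_comm, mul_assoc, one_mul, mul_one,
      he0, he, fe0, fe, fh0, fh, hse, hsf, hsh, se, sf, sh,
      smul_add, smul_sub, smul_smul, two']
    module
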